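/- If H^∞_v(G) is normed and nontrivial and the closure of E_v in ℂ is a compact subset of G (with G ≠ ℂ), then H^∞_v(G) is not a Banach space. -/

import Mathlib

open Complex Metric Set Filter Topology MeasureTheory

noncomputable section

/-- `f` is holomorphic on `G` and `sup_{z in G} v z * |f z| < ∞`. -/
def MemHv (G : Set ℂ) (v : ℂ → ℝ) (f : ℂ → ℂ) : Prop :=
  DifferentiableOn ℂ f G ∧ ∃ C : ℝ, ∀ z ∈ G, v z * ‖f z‖ ≤ C

/-- The weighted sup-seminorm `‖f‖_v`. -/
def HvNorm (G : Set ℂ) (v : ℂ → ℝ) (f : ℂ → ℂ) : ℝ :=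
  sSup ((fun z => v z * ‖f z‖) '' G)

/-- A `‖·‖_v`-Cauchy sequence. -/
def HvCauchy (G : Set ℂ) (v : ℂ → ℝ) (F : ℕ → ℂ → ℂ) : Prop :=
  ∀ ε : ℝ, 0 < ε → ∃ N : ℕ, ∀ m ≥ N, ∀ n ≥ N, ∀ z ∈ G,
    v z * ‖F m z - F n z‖ ≤ ε

/-- Convergence in the `‖·‖_v`-seminorm. -/
def HvTendsto (G : Set ℂ) (v : ℂ → ℝ) (F : ℕ → ℂ → ℂ) (f : ℂ → ℂ) : Prop :=
  ∀ ε : ℝ, 0 < ε → ∃ N : ℕ, ∀ n ≥ N, ∀ z ∈ G,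
    v z * ‖F n z - f z‖ ≤ ε

/-- Completeness of `H^∞_v(G)`: every Cauchy sequence converges in the space. -/
def HvComplete (G : Set ℂ) (v : ℂ → ℝ) : Prop :=
  ∀ F : ℕ → ℂ → ℂ, (∀ n, MemHv G v (F n)) → HvCauchy G v F →
    ∃ f : ℂ → ℂ, MemHv G v f ∧ HvTendsto G v F f

/-- The seminorm `‖·‖_v` is a norm: `‖f‖_v = 0` forces `f = 0` on `G`. -/
def HvNormed (G : Set ℂ) (v : ℂ → ℝ) : Prop :=
  ∀ f : ℂ → ℂ, MemHv G v f → (∀ z ∈ G, v z * ‖f z‖ = 0) →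
    ∀ z ∈ G, f z = 0

/-- `H^∞_v(G)` is a Banach space. -/
def IsBanachHv (G : Set ℂ) (v : ℂ → ℝ) : Prop :=
  HvNormed G v ∧ HvComplete G v

theorem stmt11 (G : Set ℂ) (v : ℂ → ℝ) (hG : IsOpen G) (hGc : IsConnected G)
    (hv : ∀ z ∈ G, 0 ≤ v z) (hGne : G ≠ Set.univ)
    (hacc : ∃ z ∈ G, AccPt z (𝓟 {w ∈ G | 0 < v w}))
    (hne : ∃ f : ℂ → ℂ, MemHv G v f ∧ ∃ z ∈ G, f z ≠ 0)
    (hcomp : IsCompact (closure {w ∈ G | 0 < v w}))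
    (hsub : closure {w ∈ G | 0 < v w} ⊆ G) :
    ¬ HvComplete G v := by
  intro hcompl
  obtain ⟨f, hf, z₁, hz₁G, hz₁⟩ := hne
  obtain ⟨z₀, hz₀G, hz₀acc⟩ := hacc
  set E : Set ℂ := {w ∈ G | 0 < v w} with hEdef
  have hEfreq : ∃ᶠ z in 𝓝[≠] z₀, z ∈ E := by
    rw [frequently_nhdsWithin_iff]
    exact (accPt_iff_frequently.mp hz₀acc).mono fun y hy => ⟨hy.2, hy.1⟩
  have hEne : E.Nonempty := hEfreq.exists
  set K : Set ℂ := closure E with hKdef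
  have hKne : K.Nonempty := hEne.closure
  have hEK : E ⊆ K := subset_closure
  obtain ⟨b, hbfr⟩ : (frontier G).Nonempty :=
    nonempty_frontier_iff.mpr ⟨hGc.nonempty, hGne⟩
  have hbG : b ∉ G := by
    intro h
    exact hbfr.2 (by rwa [hG.interior_eq])
  have hbcl : b ∈ closure G := hbfr.1
  have hbK : b ∉ K := fun h => hbG (hsub h)
  set d : ℝ := Metric.infDist b K with hddef
  have hd : 0 < d := (isClosed_closure.notMem_iff_infDist_pos hKne).mp hbK
  have hKd : ∀ z ∈ K, d ≤ ‖z - b‖ := by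
    intro z hz
    have := Metric.infDist_le_dist_of_mem (x := b) hz
    rwa [Complex.dist_eq, norm_sub_rev] at this
  have hzbne : ∀ z ∈ G, z - b ≠ 0 := fun z hz =>
    sub_ne_zero.mpr (fun h => hbG (h ▸ hz))
  obtain ⟨C, hC⟩ := hf.2
  set C₀ : ℝ := max C 0 with hC₀def
  have hC₀0 : 0 ≤ C₀ := le_max_right _ _
  have hC₀ : ∀ z ∈ G, v z * ‖f z‖ ≤ C₀ := fun z hz =>
    (hC z hz).trans (le_max_left _ _)
  have hvzero : ∀ z ∈ G, z ∉ E → v z = 0 := by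
    intro z hz hzE
    by_contra h
    exact hzE ⟨hz, lt_of_le_of_ne (hv z hz) (Ne.symm h)⟩
  -- key claim: f vanishes at every point of G close to b
  have key : ∀ a ∈ G, ‖a - b‖ < d / 2 → f a = 0 := by
    intro a haG hab
    have hKa : ∀ z ∈ K, d / 2 ≤ ‖z - a‖ := by
      intro z hz
      have h1 : ‖z - b‖ - ‖a - b‖ ≤ ‖z - a‖ := by
        have h0 := norm_sub_norm_le (z - b) (a - b)
        rw [show (z - b) - (a - b) = z - a by ring] at h0
        simpa using h0
      have := hKd z hz
      linarith
    set S : ℕ → ℂ → ℂ := fun n z => ∑ k ∈ Finset.range n, (a - b) ^ k / (z - b) ^ (k + 1)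
      with hSdef
    set F : ℕ → ℂ → ℂ := fun n z => f z * S n z with hFdef
    have hterm : ∀ z ∈ K, ∀ k : ℕ,
        ‖(a - b) ^ k / (z - b) ^ (k + 1)‖ ≤ (1 / 2) ^ k / d := by
      intro z hz k
      rw [norm_div, norm_pow, norm_pow]
      have h1 : ‖a - b‖ ^ k ≤ (d / 2) ^ k :=
        pow_le_pow_left₀ (norm_nonneg _) hab.le k
      have h2 : d ^ (k + 1) ≤ ‖z - b‖ ^ (k + 1) :=
        pow_le_pow_left₀ hd.le (hKd z hz) _
      have heq : ((d / 2) ^ k) / (d ^ (k + 1)) = (1 / 2) ^ k / d := by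
        field_simp
        ring
      calc ‖a - b‖ ^ k / ‖z - b‖ ^ (k + 1)
          ≤ (d / 2) ^ k / d ^ (k + 1) :=
            div_le_div₀ (by positivity) h1 (by positivity) h2
        _ = (1 / 2) ^ k / d := heq
    have hSbound : ∀ z ∈ K, ∀ n, ‖S n z‖ ≤ 2 / d := by
      intro z hz n
      calc ‖S n z‖
          ≤ ∑ k ∈ Finset.range n, ‖(a - b) ^ k / (z - b) ^ (k + 1)‖ :=
            norm_sum_le _ _
        _ ≤ ∑ k ∈ Finset.range n, ((1 / 2 : ℝ)) ^ k / d :=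
            Finset.sum_le_sum fun k _ => hterm z hz k
        _ = (∑ k ∈ Finset.range n, ((1 / 2 : ℝ)) ^ k) / d := by rw [Finset.sum_div]
        _ ≤ 2 / d := by gcongr; exact sum_geometric_two_le n
    have hSdiff : ∀ n, DifferentiableOn ℂ (S n) G := by
      intro n
      apply DifferentiableOn.fun_sum
      intro k _
      exact (differentiableOn_const _).div
        (((differentiableOn_id.sub (differentiableOn_const b)).pow _))
        (fun z hz => pow_ne_zero _ (hzbne z hz))
    have hmem : ∀ n, MemHv G v (F n) := by
      intro n
      refine ⟨hf.1.mul (hSdiff n), C₀ * (2 / d), ?_⟩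
      intro z hzG
      by_cases hzE : z ∈ E
      · have hzK : z ∈ K := hEK hzE
        calc v z * ‖f z * S n z‖
            = (v z * ‖f z‖) * ‖S n z‖ := by
              rw [norm_mul]; ring
          _ ≤ C₀ * (2 / d) :=
              mul_le_mul (hC₀ z hzG) (hSbound z hzK n) (norm_nonneg _) hC₀0
      · rw [hvzero z hzG hzE, zero_mul]
        exact mul_nonneg hC₀0 (by positivity)
    have htail : ∀ z ∈ K, ∀ n m : ℕ, n ≤ m →
        ‖S m z - S n z‖ ≤ 2 / d * (1 / 2) ^ n := by
      intro z hz n m hnm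
      have hsub' : S m z - S n z = ∑ k ∈ Finset.Ico n m, (a - b) ^ k / (z - b) ^ (k + 1) := by
        rw [hSdef]
        simp only
        rw [Finset.sum_Ico_eq_sub _ hnm]
      rw [hsub']
      have hgeo : ∑ k ∈ Finset.Ico n m, ((1 / 2 : ℝ)) ^ k ≤ 2 * (1 / 2) ^ n := by
        have h1 : ∑ k ∈ Finset.Ico n m, ((1 / 2 : ℝ)) ^ k
            = (1 / 2) ^ n * ∑ j ∈ Finset.range (m - n), ((1 / 2 : ℝ)) ^ j := by
          rw [Finset.sum_Ico_eq_sum_range, Finset.mul_sum]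
          exact Finset.sum_congr rfl fun j _ => by rw [← pow_add]
        rw [h1, mul_comm]
        gcongr
        exact sum_geometric_two_le _
      calc ‖∑ k ∈ Finset.Ico n m, (a - b) ^ k / (z - b) ^ (k + 1)‖
          ≤ ∑ k ∈ Finset.Ico n m, ‖(a - b) ^ k / (z - b) ^ (k + 1)‖ :=
            norm_sum_le _ _
        _ ≤ ∑ k ∈ Finset.Ico n m, ((1 / 2 : ℝ)) ^ k / d :=
            Finset.sum_le_sum fun k _ => hterm z hz k
        _ = (∑ k ∈ Finset.Ico n m, ((1 / 2 : ℝ)) ^ k) / d := by rw [Finset.sum_div]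
        _ ≤ (2 * (1 / 2) ^ n) / d := by gcongr
        _ = 2 / d * (1 / 2) ^ n := by ring
    have hcau : HvCauchy G v F := by
      intro ε hε
      obtain ⟨N, hN⟩ := exists_pow_lt_of_lt_one
        (show (0 : ℝ) < ε * d / (2 * (C₀ + 1)) by positivity)
        (show (1 / 2 : ℝ) < 1 by norm_num)
      have main : ∀ m n : ℕ, N ≤ n → n ≤ m → ∀ z ∈ G,
          v z * ‖F m z - F n z‖ ≤ ε := by
        intro m n hNn hnm z hzG
        by_cases hzE : z ∈ E
        · have hzK : z ∈ K := hEK hzE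
          have hFF : F m z - F n z = f z * (S m z - S n z) := by rw [hFdef]; ring
          have hstep : v z * ‖F m z - F n z‖
              ≤ C₀ * (2 / d * (1 / 2) ^ n) := by
            rw [hFF, norm_mul, ← mul_assoc]
            exact mul_le_mul (hC₀ z hzG) (htail z hzK n m hnm)
              (norm_nonneg _) hC₀0
          have hpow : ((1 / 2 : ℝ)) ^ n ≤ (1 / 2) ^ N :=
            pow_le_pow_of_le_one (by norm_num) (by norm_num) hNn
          have hlast : C₀ * (2 / d * (1 / 2) ^ n) ≤ ε := by
            have h2 : C₀ * (2 / d * (1 / 2) ^ n) ≤ (C₀ + 1) * (2 / d * (1 / 2) ^ N) := by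
              have e1 : 2 / d * (1 / 2 : ℝ) ^ n ≤ 2 / d * (1 / 2) ^ N :=
                mul_le_mul_of_nonneg_left hpow (by positivity)
              exact mul_le_mul (by linarith) e1 (by positivity) (by linarith)
            have h3 : (C₀ + 1) * (2 / d * (1 / 2) ^ N)
                ≤ (C₀ + 1) * (2 / d * (ε * d / (2 * (C₀ + 1)))) := by
              gcongr
            have h4 : (C₀ + 1) * (2 / d * (ε * d / (2 * (C₀ + 1)))) = ε := by
              field_simp
            linarith
          linarith
        · rw [hvzero z hzG hzE, zero_mul]; exact hε.le
      refine ⟨N, fun m hm n hn z hzG => ?_⟩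
      rcases le_total n m with h | h
      · exact main m n hn h z hzG
      · rw [norm_sub_rev]
        exact main n m hm h z hzG
    obtain ⟨g, hg, htend⟩ := hcompl F hmem hcau
    -- pointwise identification on E
    have hpt : ∀ z ∈ E, (z - a) * g z - f z = 0 := by
      intro z hzE
      have hzK : z ∈ K := hEK hzE
      have hzG : z ∈ G := hzE.1
      have hvz : 0 < v z := hzE.2
      have hzb : z - b ≠ 0 := hzbne z hzG
      have hza : z - a ≠ 0 := by
        intro h
        have := hKa z hzK
        rw [h, norm_zero] at this
        linarith
      have t1 : Tendsto (fun n => F n z) atTop (𝓝 (g z)) := by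
        rw [Metric.tendsto_atTop]
        intro ε hε
        obtain ⟨N, hN⟩ := htend (ε * v z / 2) (by positivity)
        refine ⟨N, fun n hn => ?_⟩
        have h1 := hN n hn z hzG
        rw [Complex.dist_eq]
        have h1' : v z * ‖F n z - g z‖ ≤ v z * (ε / 2) := by linarith
        have h2 : ‖F n z - g z‖ ≤ ε / 2 :=
          le_of_mul_le_mul_left h1' hvz
        linarith
      set w : ℂ := (a - b) / (z - b) with hwdef
      have hw : ‖w‖ < 1 := by
        rw [hwdef, norm_div]
        rw [div_lt_one (lt_of_lt_of_le hd (hKd z hzK))]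
        have := hKd z hzK
        linarith
      have hgeom : HasSum (fun k : ℕ => w ^ k) (1 - w)⁻¹ :=
        hasSum_geometric_of_norm_lt_one hw
      have htS : Tendsto (fun n => ∑ k ∈ Finset.range n, w ^ k) atTop (𝓝 (1 - w)⁻¹) :=
        hgeom.tendsto_sum_nat
      have hSw : ∀ n, S n z = (z - b)⁻¹ * ∑ k ∈ Finset.range n, w ^ k := by
        intro n
        rw [Finset.mul_sum]
        refine Finset.sum_congr rfl fun k _ => ?_
        rw [hwdef, div_pow, pow_succ, div_mul_eq_div_div, div_eq_inv_mul]
      have t2 : Tendsto (fun n => F n z) atTop (𝓝 (f z * ((z - b)⁻¹ * (1 - w)⁻¹))) := by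
        have : (fun n => F n z) = fun n => f z * ((z - b)⁻¹ * ∑ k ∈ Finset.range n, w ^ k) := by
          funext n
          rw [hFdef]
          simp only
          rw [hSw n]
        rw [this]
        exact (htS.const_mul _).const_mul _
      have hident : f z * ((z - b)⁻¹ * (1 - w)⁻¹) = f z * (z - a)⁻¹ := by
        congr 1
        rw [← mul_inv]
        congr 1
        rw [hwdef]
        field_simp
        ring
      rw [hident] at t2
      have hgz : g z = f z * (z - a)⁻¹ := tendsto_nhds_unique t1 t2
      rw [hgz]
      field_simp
      ring
    -- identity theorem
    have hanal : AnalyticOnNhd ℂ (fun z => (z - a) * g z - f z) G :=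
      (((differentiableOn_id.sub (differentiableOn_const a)).mul hg.1).sub hf.1).analyticOnNhd hG
    have hfreq : ∃ᶠ z in 𝓝[≠] z₀, (fun z => (z - a) * g z - f z) z = 0 :=
      hEfreq.mono fun z hz => hpt z hz
    have hzeroG := hanal.eqOn_zero_of_preconnected_of_frequently_eq_zero
      hGc.isPreconnected hz₀G hfreq
    have := hzeroG haG
    simpa using this
  -- conclude f ≡ 0 on G
  obtain ⟨a₀, ha₀G, ha₀⟩ : ∃ a ∈ G, dist b a < d / 2 :=
    Metric.mem_closure_iff.mp hbcl _ (by positivity)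
  set U : Set ℂ := G ∩ Metric.ball b (d / 2) with hUdef
  have hUopen : IsOpen U := hG.inter Metric.isOpen_ball
  have ha₀U : a₀ ∈ U := by
    refine ⟨ha₀G, ?_⟩
    rw [Metric.mem_ball, dist_comm]
    exact ha₀
  have hfU : ∀ z ∈ U, f z = 0 := by
    intro z hz
    apply key z hz.1
    have := hz.2
    rwa [Metric.mem_ball, Complex.dist_eq] at this
  have hffreq : ∃ᶠ z in 𝓝[≠] a₀, f z = 0 := by
    apply Filter.Eventually.frequently
    apply eventually_nhdsWithin_of_eventually_nhds
    filter_upwards [hUopen.mem_nhds ha₀U] with z hz using hfU z hz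
  have hfzero : EqOn f 0 G :=
    (hf.1.analyticOnNhd hG).eqOn_zero_of_preconnected_of_frequently_eq_zero
      hGc.isPreconnected ha₀G hffreq
  exact hz₁ (hfzero hz₁G)
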